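/- Let N ≥ 1. For every N-th root of unity θ ∈ k, the map ω_θ(n,m,ℓ) = θ^{ℓ̄·⌊(n̄+m̄)/N⌋} is a 3-cocycle on the cyclic group Z/N with values in kˣ; moreover ω_θ·ω_{θ'} = ω_{θ·θ'} pointwise, ω_θ and ω_{θ'} are cohomologous if and only if θ = θ', and every 3-cocycle on Z/N with values in kˣ is cohomologous to ω_θ for some N-th root of unity θ. Hence θ ↦ [ω_θ] is a group isomorphism from the group of N-th roots of unity in k onto H³(Z/N, kˣ). -/

import Mathlib

/-- A 3-cocycle on an additive group `A` with values in `kˣ` (trivial action). -/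
def IsAddCocycle3 {k : Type*} [Field k] {A : Type*} [AddGroup A] (ω : A → A → A → kˣ) : Prop :=
  ∀ x y z w : A, ω y z w * ω x (y + z) w * ω x y z = ω (x + y) z w * ω x y (z + w)

/-- A 3-coboundary on an additive group `A` with values in `kˣ`;
equivalently, the class in `H³(A, kˣ)` is trivial. -/
def IsAddCoboundary3 {k : Type*} [Field k] {A : Type*} [AddGroup A] (ω : A → A → A → kˣ) : Prop :=
  ∃ t : A → A → kˣ, ∀ x y z : A,
    ω x y z = t y z * t x (y + z) * (t (x + y) z)⁻¹ * (t x y)⁻¹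

/-- Two 3-cocycles are cohomologous if their pointwise quotient is a coboundary. -/
def AddCohomologous3 {k : Type*} [Field k] {A : Type*} [AddGroup A]
    (ω ω' : A → A → A → kˣ) : Prop :=
  IsAddCoboundary3 (fun x y z => ω x y z * (ω' x y z)⁻¹)

/-- The standard 3-cocycle `ω_θ(n,m,ℓ) = θ^(ℓ̄·⌊(n̄+m̄)/N⌋)` on `ZMod N`
associated to an `N`-th root of unity `θ`. -/
def omegaStd {k : Type*} [Field k] (N : ℕ) (θ : kˣ) : ZMod N → ZMod N → ZMod N → kˣ :=
  fun n m ℓ => θ ^ (ℓ.val * ((n.val + m.val) / N))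

namespace St1Aux

def Fc (N : ℕ) (a b : ZMod N) : ℕ := (a.val + b.val) / N

variable {N : ℕ} [NeZero N]

lemma hval (a b : ZMod N) : a.val + b.val = (a + b).val + N * Fc N a b := by
  have h := ZMod.val_add a b
  have := Nat.mod_add_div (a.val + b.val) N
  unfold Fc; omega

lemma carry (x y z : ZMod N) :
    Fc N y z + Fc N x (y + z) = Fc N x y + Fc N (x + y) z := by
  have e1 := hval y z
  have e2 := hval x (y + z)
  have e3 := hval x y
  have e4 := hval (x + y) z
  have e5 : (x + (y + z)).val = ((x + y) + z).val := by rw [add_assoc]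
  have hpos : 0 < N := NeZero.pos N
  apply Nat.eq_of_mul_eq_mul_left hpos
  zify at *
  linarith

variable {k : Type*} [Field k]

omit [NeZero N] in
lemma pow_mod (σ : kˣ) (h : σ ^ N = 1) {a b : ℕ} (hab : a % N = b % N) :
    σ ^ a = σ ^ b := by
  conv_lhs => rw [← Nat.div_add_mod a N]
  conv_rhs => rw [← Nat.div_add_mod b N]
  rw [pow_add, pow_add, pow_mul, pow_mul, h, hab]
  simp

lemma prod_univ_eq_range {M : Type*} [CommMonoid M] (f : ZMod N → M) :
    ∏ j : ZMod N, f j = ∏ i ∈ Finset.range N, f (i : ZMod N) := by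
  refine (Finset.prod_nbij' (s := Finset.range N) (t := Finset.univ)
    (f := fun i => f (i : ZMod N)) (g := f)
    (fun i => (i : ZMod N)) (fun j => j.val) ?_ ?_ ?_ ?_ ?_).symm
  · intro a _; exact Finset.mem_univ _
  · intro a _; exact Finset.mem_range.mpr (ZMod.val_lt a)
  · intro a ha; exact ZMod.val_cast_of_lt (Finset.mem_range.mp ha)
  · intro a _; exact ZMod.natCast_rightInverse a
  · intro a _; rfl

lemma sum_F (a : ZMod N) : ∑ j : ZMod N, Fc N a j = a.val := by
  have h1 : ∑ j : ZMod N, (N * Fc N a j + (a + j).val) = ∑ j : ZMod N, (a.val + j.val) := by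
    refine Finset.sum_congr rfl fun j _ => ?_
    have := hval a j; omega
  rw [Finset.sum_add_distrib, Finset.sum_add_distrib, ← Finset.mul_sum] at h1
  have h2 : ∑ j : ZMod N, (a + j).val = ∑ j : ZMod N, j.val :=
    Fintype.sum_equiv (Equiv.addLeft a) _ _ (fun j => rfl)
  have h3 : ∑ _j : ZMod N, a.val = N * a.val := by
    rw [Finset.sum_const, Finset.card_univ, ZMod.card, smul_eq_mul]
  have hpos : 0 < N := NeZero.pos N
  exact Nat.eq_of_mul_eq_mul_left hpos (by omega)

section Gen
variable {A : Type*} [AddCommGroup A]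

def cb (t : A → A → kˣ) : A → A → A → kˣ :=
  fun x y z => t y z * t x (y + z) * (t (x + y) z)⁻¹ * (t x y)⁻¹

lemma cb_cocycle (t : A → A → kˣ) : IsAddCocycle3 (cb t) := by
  intro x y z w
  simp only [cb, add_assoc]
  apply Units.ext
  simp only [Units.val_mul, Units.val_inv_eq_inv_val]
  field_simp

lemma cocycle_mul_inv {ω η : A → A → A → kˣ} (hω : IsAddCocycle3 ω) (hη : IsAddCocycle3 η) :
    IsAddCocycle3 (fun x y z => ω x y z * (η x y z)⁻¹) := by
  intro x y z w
  have h1 := congrArg Units.val (hω x y z w)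
  have h2 := congrArg Units.val (hη x y z w)
  simp only [Units.val_mul] at h1 h2
  apply Units.ext
  simp only [Units.val_mul, Units.val_inv_eq_inv_val]
  field_simp
  linear_combination (((η (x+y) z w : kˣ) : k) * (η x y (z+w) : kˣ)) * h1 -
    (((ω (x+y) z w : kˣ) : k) * (ω x y (z+w) : kˣ)) * h2

lemma cocycle_tilde {ω : A → A → A → kˣ} (hω : IsAddCocycle3 ω) :
    IsAddCocycle3 (fun x y z => (ω z y x)⁻¹) := by
  intro x y z w
  have h := congrArg Units.val (hω w z y x)
  simp only [Units.val_mul] at h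
  rw [add_comm w z, add_comm z y, add_comm y x] at h
  apply Units.ext
  simp only [Units.val_mul, Units.val_inv_eq_inv_val]
  field_simp
  linear_combination -h

lemma norm1 {ω : A → A → A → kˣ} (hω : IsAddCocycle3 ω) : ω 0 0 0 = 1 := by
  have h := hω 0 0 0 0
  simp only [add_zero] at h
  have hk := congrArg Units.val h
  simp only [Units.val_mul] at hk
  have hne : ((ω 0 0 0 : kˣ) : k) ≠ 0 := Units.ne_zero _
  apply Units.ext
  show ((ω 0 0 0 : kˣ) : k) = 1
  have h2 : ((ω 0 0 0 : kˣ) : k) * (ω 0 0 0 : kˣ) * ((ω 0 0 0 : kˣ) : k) =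
      ((ω 0 0 0 : kˣ) : k) * (ω 0 0 0 : kˣ) * 1 := by
    rw [mul_one]; linear_combination hk
  exact mul_left_cancel₀ (mul_ne_zero hne hne) h2

lemma rel_a {ω : A → A → A → kˣ} (hω : IsAddCocycle3 ω) (z w : A) :
    ω 0 z w * ω 0 0 z = ω 0 0 (z + w) := by
  have h := hω 0 0 z w
  simp only [zero_add, add_zero] at h
  rw [mul_assoc] at h
  exact mul_left_cancel h

lemma rel_b {ω : A → A → A → kˣ} (hω : IsAddCocycle3 ω) (x w : A) :
    ω x 0 w = ω 0 0 w * ω x 0 0 := by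
  have h := hω x 0 0 w
  simp only [zero_add, add_zero] at h
  have h' : ω x 0 w * (ω 0 0 w * ω x 0 0) = ω x 0 w * ω x 0 w := by
    apply Units.ext
    have hk := congrArg Units.val h
    simp only [Units.val_mul] at hk ⊢
    linear_combination hk
  exact (mul_left_cancel h').symm

lemma rel_c {ω : A → A → A → kˣ} (hω : IsAddCocycle3 ω) (x y : A) :
    ω x y 0 * ω y 0 0 = ω (x + y) 0 0 := by
  have h := hω x y 0 0
  simp only [zero_add, add_zero] at h
  have h' : ω x y 0 * (ω x y 0 * ω y 0 0) = ω x y 0 * ω (x + y) 0 0 := by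
    apply Units.ext
    have hk := congrArg Units.val h
    simp only [Units.val_mul] at hk ⊢
    linear_combination hk
  exact mul_left_cancel h'

end Gen

end St1Aux

namespace St1Aux

section Main
variable {k : Type*} [Field k] {N : ℕ} [NeZero N]

/-- Main lemma: a normalized 3-cocycle on `ZMod N` satisfies an inverse-free
coboundary balance equation against the standard cocycle `θ^(x.val * Fc y z)`. -/
lemma main_normalized (hN2 : 1 < N) (ω : ZMod N → ZMod N → ZMod N → kˣ)
    (hω : IsAddCocycle3 ω)
    (h0a : ∀ y z, ω 0 y z = 1) (h0b : ∀ x z, ω x 0 z = 1) (h0c : ∀ x y, ω x y 0 = 1) :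
    ∃ θ : kˣ, θ ^ N = 1 ∧ ∃ T : ZMod N → ZMod N → kˣ, ∀ x y z,
      ω x y z * T (x + y) z * T x y = θ ^ (x.val * Fc N y z) * T y z * T x (y + z) := by
  have hv1 : (1 : ZMod N).val = 1 := by
    rw [ZMod.val_one_eq_one_mod, Nat.mod_eq_of_lt hN2]
  set T : ZMod N → ZMod N → kˣ :=
    fun a b => ∏ i ∈ Finset.range b.val, ω a (i : ZMod N) 1 with hT
  set Θ : ZMod N → kˣ := fun a => ∏ j : ZMod N, ω a j 1 with hΘ
  have hΘrange : ∀ a, Θ a = ∏ i ∈ Finset.range N, ω a (i : ZMod N) 1 :=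
    fun a => prod_univ_eq_range _
  -- Θ is a homomorphism
  have hΘhom : ∀ a b, Θ (a + b) = Θ a * Θ b := by
    intro a b
    have h : ∏ j : ZMod N, (ω b j 1 * ω a (b + j) 1 * ω a b j)
        = ∏ j : ZMod N, (ω (a + b) j 1 * ω a b (j + 1)) :=
      Finset.prod_congr rfl (fun j _ => hω a b j 1)
    simp only [Finset.prod_mul_distrib] at h
    have r1 : ∏ j : ZMod N, ω a (b + j) 1 = Θ a :=
      Fintype.prod_equiv (Equiv.addLeft b) (fun j => ω a (b + j) 1) (fun j => ω a j 1)
        (fun j => rfl)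
    have r2 : ∏ j : ZMod N, ω a b (j + 1) = ∏ j : ZMod N, ω a b j :=
      Fintype.prod_equiv (Equiv.addRight 1) (fun j => ω a b (j + 1)) (fun j => ω a b j)
        (fun j => rfl)
    rw [r1, r2] at h
    have h2 := mul_right_cancel h
    exact (h2.symm.trans (mul_comm (Θ b) (Θ a)))
  have hΘ0 : Θ 0 = 1 := by
    simp only [hΘ]
    exact Finset.prod_eq_one (fun j _ => h0a j 1)
  have hΘnat : ∀ n : ℕ, Θ ((n : ℕ) : ZMod N) = (Θ 1) ^ n := by
    intro n
    induction n with
    | zero => simpa using hΘ0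
    | succ n ih =>
        have : (((n + 1 : ℕ)) : ZMod N) = ((n : ℕ) : ZMod N) + 1 := by push_cast; ring
        rw [this, hΘhom, ih, pow_succ]
  set θ : kˣ := Θ 1 with hθdef
  have hΘval : ∀ a : ZMod N, Θ a = θ ^ a.val := by
    intro a
    conv_lhs => rw [← ZMod.natCast_rightInverse a]
    exact hΘnat a.val
  have hθN : θ ^ N = 1 := by
    have := hΘnat N
    rw [ZMod.natCast_self, hΘ0] at this
    exact this.symm
  refine ⟨θ, hθN, T, ?_⟩
  -- update rule
  have hTz : ∀ a, T a 0 = 1 := by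
    intro a; simp [hT, ZMod.val_zero]
  have hup : ∀ a b : ZMod N, T a b * ω a b 1 = T a (b + 1) * θ ^ (a.val * Fc N b 1) := by
    intro a b
    have hbv : (b + 1).val = (b.val + 1) % N := by
      rw [ZMod.val_add, hv1]
    have hblt : b.val < N := ZMod.val_lt b
    by_cases hc : b.val + 1 < N
    · have h1 : (b + 1).val = b.val + 1 := by rw [hbv, Nat.mod_eq_of_lt hc]
      have h2 : Fc N b 1 = 0 := by
        unfold Fc; rw [hv1]; exact Nat.div_eq_of_lt hc
      rw [h2, mul_zero, pow_zero, mul_one]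
      show T a b * ω a b 1 = ∏ i ∈ Finset.range (b+1).val, ω a (i : ZMod N) 1
      rw [h1, Finset.prod_range_succ, ZMod.natCast_rightInverse b]
    · have hN' : b.val + 1 = N := by omega
      have h1 : (b + 1).val = 0 := by rw [hbv, hN', Nat.mod_self]
      have h2 : Fc N b 1 = 1 := by
        unfold Fc; rw [hv1, hN', Nat.div_self (by omega)]
      have h3 : T a (b + 1) = 1 := by
        show (∏ i ∈ Finset.range (b+1).val, ω a (i : ZMod N) 1) = 1
        rw [h1]; simp
      rw [h3, h2, mul_one, one_mul]
      calc T a b * ω a b 1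
          = ∏ i ∈ Finset.range (b.val + 1), ω a (i : ZMod N) 1 := by
            rw [Finset.prod_range_succ, ZMod.natCast_rightInverse b]
        _ = Θ a := by rw [hN', ← hΘrange]
        _ = θ ^ a.val := hΘval a
  -- the key induction
  have key : ∀ n : ℕ, n < N → ∀ x y : ZMod N,
      ω x y ((n : ℕ) : ZMod N) * T (x + y) ((n : ℕ) : ZMod N) * T x y
        = θ ^ (x.val * Fc N y ((n : ℕ) : ZMod N)) * T y ((n : ℕ) : ZMod N)
            * T x (y + ((n : ℕ) : ZMod N)) := by
    intro n
    induction n with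
    | zero =>
        intro _ x y
        have hcast : (((0 : ℕ)) : ZMod N) = (0 : ZMod N) := by push_cast; ring
        rw [hcast]
        have hF : Fc N y 0 = 0 := by
          unfold Fc; rw [ZMod.val_zero, add_zero]; exact Nat.div_eq_of_lt (ZMod.val_lt y)
        rw [h0c, hTz, hTz, hF]
        simp
    | succ n ih =>
        intro hn x y
        have hnN : n < N := by omega
        set z : ZMod N := ((n : ℕ) : ZMod N) with hzdef
        have hzval : z.val = n := ZMod.val_cast_of_lt hnN
        have hcast : (((n + 1 : ℕ)) : ZMod N) = z + 1 := by push_cast; rw [hzdef]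
        rw [hcast]
        have hassoc : y + (z + 1) = (y + z) + 1 := by rw [add_assoc]
        rw [hassoc]
        -- hypotheses
        have hco := hω x y z 1
        have IH := ih hnN x y
        have e1 := hup y z
        have e2 := hup x (y + z)
        have e3 := hup (x + y) z
        -- exponent identity
        have hkey : x.val * Fc N y z + (y.val * Fc N z 1 + x.val * Fc N (y + z) 1)
            = (x.val * Fc N y (z + 1) + (x + y).val * Fc N z 1)
              + N * (Fc N x y * Fc N z 1) := by
          have hc1 := carry y z 1
          have hv2 := hval x y
          zify at hc1 hv2 ⊢
          linear_combination (-(x.val : ℤ)) * hc1 + (Fc N z 1 : ℤ) * hv2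
        have hexp : θ ^ (x.val * Fc N y z) * (θ ^ (y.val * Fc N z 1)
              * θ ^ (x.val * Fc N (y + z) 1))
            = θ ^ (x.val * Fc N y (z + 1)) * θ ^ ((x + y).val * Fc N z 1) := by
          rw [← pow_add, ← pow_add, ← pow_add, hkey, pow_add, pow_mul, hθN, one_pow, mul_one]
        -- now pure commutative-group bookkeeping; transfer to k
        have Hco := congrArg Units.val hco
        have HIH := congrArg Units.val IH
        have He1 := congrArg Units.val e1
        have He2 := congrArg Units.val e2
        have He3 := congrArg Units.val e3
        have Hexp := congrArg Units.val hexp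
        simp only [Units.val_mul] at Hco HIH He1 He2 He3 Hexp
        -- goal
        have Hgoal : ((ω x y (z+1) : kˣ) : k) * (T (x+y) (z+1) : kˣ) * (T x y : kˣ)
            * (((θ ^ (y.val * Fc N z 1) : kˣ) : k) * ((θ ^ (x.val * Fc N (y+z) 1) : kˣ) : k)
               * ((θ ^ ((x+y).val * Fc N z 1) : kˣ) : k))
            = ((θ ^ (x.val * Fc N y (z+1)) : kˣ) : k) * (T y (z+1) : kˣ) * (T x ((y+z)+1) : kˣ)
            * (((θ ^ (y.val * Fc N z 1) : kˣ) : k) * ((θ ^ (x.val * Fc N (y+z) 1) : kˣ) : k)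
               * ((θ ^ ((x+y).val * Fc N z 1) : kˣ) : k)) := by
          linear_combination
            (-(((ω x y (z+1) : kˣ) : k) * (T x y : kˣ) * ((θ ^ (y.val * Fc N z 1) : kˣ) : k)
               * ((θ ^ (x.val * Fc N (y+z) 1) : kˣ) : k))) * He3 -
            (((T (x+y) z : kˣ) : k) * (T x y : kˣ) * ((θ ^ (y.val * Fc N z 1) : kˣ) : k)
               * ((θ ^ (x.val * Fc N (y+z) 1) : kˣ) : k)) * Hco +
            (((ω y z 1 : kˣ) : k) * (ω x (y+z) 1 : kˣ) * ((θ ^ (y.val * Fc N z 1) : kˣ) : k)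
               * ((θ ^ (x.val * Fc N (y+z) 1) : kˣ) : k)) * HIH +
            (((ω x (y+z) 1 : kˣ) : k) * ((θ ^ (y.val * Fc N z 1) : kˣ) : k)
               * ((θ ^ (x.val * Fc N (y+z) 1) : kˣ) : k) * ((θ ^ (x.val * Fc N y z) : kˣ) : k)
               * (T x (y+z) : kˣ)) * He1 +
            (((T y (z+1) : kˣ) : k) * ((θ ^ (y.val * Fc N z 1) : kˣ) : k)
               * ((θ ^ (y.val * Fc N z 1) : kˣ) : k) * ((θ ^ (x.val * Fc N (y+z) 1) : kˣ) : k)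
               * ((θ ^ (x.val * Fc N y z) : kˣ) : k)) * He2 +
            (((T y (z+1) : kˣ) : k) * ((θ ^ (y.val * Fc N z 1) : kˣ) : k)
               * ((T x ((y+z)+1) : kˣ) : k) * ((θ ^ (x.val * Fc N (y+z) 1) : kˣ) : k)) * Hexp
        have hcan : ((((θ ^ (y.val * Fc N z 1) : kˣ)) : k) * ((θ ^ (x.val * Fc N (y+z) 1) : kˣ) : k)
               * ((θ ^ ((x+y).val * Fc N z 1) : kˣ) : k)) ≠ 0 := by
          apply mul_ne_zero; apply mul_ne_zero
          all_goals exact Units.ne_zero _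
        apply Units.ext
        simp only [Units.val_mul]
        exact mul_right_cancel₀ hcan Hgoal
  intro x y z
  have h := key z.val (ZMod.val_lt z) x y
  rwa [ZMod.natCast_rightInverse z] at h

lemma Fc_comm (a b : ZMod N) : Fc N a b = Fc N b a := by
  unfold Fc; rw [Nat.add_comm]

end Main

section Norm
variable {k : Type*} [Field k] {A : Type*} [AddCommGroup A]

lemma exists_normalized (ω : A → A → A → kˣ) (hω : IsAddCocycle3 ω) :
    ∃ t₁ : A → A → kˣ,
      IsAddCocycle3 (fun x y z => ω x y z * (cb t₁ x y z)⁻¹) ∧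
      (∀ y z, ω 0 y z * (cb t₁ 0 y z)⁻¹ = 1) ∧
      (∀ x z, ω x 0 z * (cb t₁ x 0 z)⁻¹ = 1) ∧
      (∀ x y, ω x y 0 * (cb t₁ x y 0)⁻¹ = 1) := by
  have Hn := congrArg Units.val (norm1 hω)
  simp only [Units.val_one] at Hn
  refine ⟨fun a b => ω 0 0 b * (ω a 0 0)⁻¹, cocycle_mul_inv hω (cb_cocycle _), ?_, ?_, ?_⟩
  · intro y z
    rw [mul_inv_eq_one]
    have Ha := congrArg Units.val (rel_a hω y z)
    simp only [Units.val_mul] at Ha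
    apply Units.ext
    simp only [cb, Units.val_mul, Units.val_inv_eq_inv_val, zero_add]
    field_simp
    linear_combination Ha
  · intro x z
    rw [mul_inv_eq_one]
    have Hb := congrArg Units.val (rel_b hω x z)
    simp only [Units.val_mul] at Hb
    apply Units.ext
    simp only [cb, Units.val_mul, Units.val_inv_eq_inv_val, zero_add, add_zero]
    field_simp
    linear_combination ((ω 0 0 0 : kˣ) : k) ^ 2 * Hb +
      (((ω 0 0 z : kˣ) : k) * ((ω x 0 0 : kˣ) : k) * (((ω 0 0 0 : kˣ) : k) + 1)) * Hn
  · intro x y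
    rw [mul_inv_eq_one]
    have Hc := congrArg Units.val (rel_c hω x y)
    simp only [Units.val_mul] at Hc
    apply Units.ext
    simp only [cb, Units.val_mul, Units.val_inv_eq_inv_val, add_zero]
    field_simp
    linear_combination Hc

end Norm

section P4
variable {k : Type*} [Field k] {N : ℕ} [NeZero N]

lemma part4core (hN2 : 1 < N) (ω : ZMod N → ZMod N → ZMod N → kˣ) (hω : IsAddCocycle3 ω) :
    ∃ θ : kˣ, θ ^ N = 1 ∧ ∃ s : ZMod N → ZMod N → kˣ, ∀ x y z,
      ω x y z * (omegaStd N θ x y z)⁻¹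
        = s y z * s x (y + z) * (s (x + y) z)⁻¹ * (s x y)⁻¹ := by
  obtain ⟨t₁, h1co, h1a, h1b, h1c⟩ :=
    exists_normalized (fun x y z => (ω z y x)⁻¹) (cocycle_tilde hω)
  obtain ⟨θ, hθN, T, hbal⟩ := main_normalized hN2 _ h1co h1a h1b h1c
  refine ⟨θ⁻¹, by rw [inv_pow, hθN, inv_one], fun a b => T b a * t₁ b a, ?_⟩
  intro x y z
  have Hb := congrArg Units.val (hbal z y x)
  simp only [cb, Units.val_mul, Units.val_inv_eq_inv_val, Units.val_pow_eq_pow_val] at Hb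
  rw [Fc_comm] at Hb
  rw [add_comm z y, add_comm y x] at Hb
  apply Units.ext
  simp only [omegaStd, Fc, Units.val_mul, Units.val_inv_eq_inv_val,
    Units.val_pow_eq_pow_val] at Hb ⊢
  field_simp at Hb ⊢
  have hθi : ((θ : kˣ) : k) ^ (z.val * ((x.val + y.val) / N))
      * ((θ : kˣ) : k)⁻¹ ^ (z.val * ((x.val + y.val) / N)) = 1 := by
    rw [← mul_pow, mul_inv_cancel₀ (Units.ne_zero θ), one_pow]
  linear_combination (-((θ : kˣ) : k)⁻¹ ^ (z.val * ((x.val + y.val) / N))) * Hb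
    - (((ω x y z : kˣ) : k) * (t₁ y x : kˣ) * (t₁ z (x + y) : kˣ) * (T y x : kˣ)
      * (T z (x + y) : kˣ)) * hθi

end P4

section Parts
variable {k : Type*} [Field k] {N : ℕ} [NeZero N]

lemma part1 (θ : kˣ) (hθ : θ ^ N = 1) : IsAddCocycle3 (omegaStd N θ) := by
  intro x y z w
  show θ ^ (w.val * Fc N y z) * θ ^ (w.val * Fc N x (y+z)) * θ ^ (z.val * Fc N x y)
      = θ ^ (w.val * Fc N (x+y) z) * θ ^ ((z+w).val * Fc N x y)
  rw [← pow_add, ← pow_add, ← pow_add]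
  have h1 := carry x y z
  have h2 := hval z w
  have key : w.val * Fc N y z + w.val * Fc N x (y + z) + z.val * Fc N x y
      = w.val * Fc N (x + y) z + (z + w).val * Fc N x y + N * (Fc N x y * Fc N z w) := by
    zify at h1 h2 ⊢
    linear_combination (w.val : ℤ) * h1 + (Fc N x y : ℤ) * h2
  rw [key, pow_add, pow_mul, hθ, one_pow, mul_one]

lemma telescope (t : ZMod N → ZMod N → kˣ) :
    ∏ j : ZMod N, (t j 1 * t 1 (j + 1) * (t (1 + j) 1)⁻¹ * (t 1 j)⁻¹) = 1 := by
  rw [Finset.prod_mul_distrib, Finset.prod_mul_distrib, Finset.prod_mul_distrib,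
    Finset.prod_inv_distrib, Finset.prod_inv_distrib]
  have h1 : ∏ j : ZMod N, t (1 + j) 1 = ∏ j : ZMod N, t j 1 :=
    Fintype.prod_equiv (Equiv.addLeft 1) (fun j => t (1 + j) 1) (fun j => t j 1) (fun j => rfl)
  have h2 : ∏ j : ZMod N, t 1 (j + 1) = ∏ j : ZMod N, t 1 j :=
    Fintype.prod_equiv (Equiv.addRight 1) (fun j => t 1 (j + 1)) (fun j => t 1 j) (fun j => rfl)
  rw [h1, h2]
  have : ∀ a b : kˣ, a * b * a⁻¹ * b⁻¹ = 1 := fun a b => by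
    rw [mul_assoc, mul_comm a⁻¹, mul_assoc]; simp
  exact this _ _

omit [NeZero N] in
lemma val_one_sq_mod : ((1 : ZMod N).val * (1 : ZMod N).val) % N = 1 % N := by
  have h : (1 : ZMod N).val = 1 % N := ZMod.val_one_eq_one_mod N
  rw [h]
  have := (Nat.mod_modEq 1 N).mul (Nat.mod_modEq 1 N)
  simpa [Nat.ModEq] using this

lemma part3fwd (θ θ' : kˣ) (hθ : θ ^ N = 1) (hθ' : θ' ^ N = 1)
    (h : AddCohomologous3 (omegaStd N θ) (omegaStd N θ')) : θ = θ' := by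
  obtain ⟨t, ht⟩ := h
  set σ := θ * θ'⁻¹ with hσ
  have hσN : σ ^ N = 1 := by rw [hσ, mul_pow, inv_pow, hθ, hθ', inv_one, mul_one]
  have hfac : ∀ j : ZMod N, omegaStd N θ 1 j 1 * (omegaStd N θ' 1 j 1)⁻¹
      = σ ^ ((1 : ZMod N).val * Fc N 1 j) := by
    intro j
    show θ ^ _ * (θ' ^ _)⁻¹ = _
    rw [← inv_pow, ← mul_pow, ← hσ]; rfl
  have hP : ∏ j : ZMod N, σ ^ ((1 : ZMod N).val * Fc N 1 j)
      = ∏ j : ZMod N, (t j 1 * t 1 (j + 1) * (t (1 + j) 1)⁻¹ * (t 1 j)⁻¹) :=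
    Finset.prod_congr rfl fun j _ => (hfac j).symm.trans (ht 1 j 1)
  rw [telescope, Finset.prod_pow_eq_pow_sum, ← Finset.mul_sum, sum_F] at hP
  have h1 : σ ^ 1 = σ ^ ((1 : ZMod N).val * (1 : ZMod N).val) :=
    pow_mod σ hσN val_one_sq_mod.symm
  have hσ1 : σ = 1 := by rw [pow_one] at h1; rw [h1, hP]
  rwa [hσ, mul_inv_eq_one] at hσ1

lemma part4 (hN1 : 1 ≤ N) (ω : ZMod N → ZMod N → ZMod N → kˣ) (hω : IsAddCocycle3 ω) :
    ∃ θ : kˣ, θ ^ N = 1 ∧ AddCohomologous3 ω (omegaStd N θ) := by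
  by_cases hN2 : 1 < N
  · obtain ⟨θ, hθN, s, hs⟩ := part4core hN2 ω hω
    exact ⟨θ, hθN, s, hs⟩
  · have hN1' : N = 1 := by omega
    subst hN1'
    refine ⟨1, one_pow 1, fun _ _ => 1, ?_⟩
    intro x y z
    have hx : x = 0 := Subsingleton.elim x 0
    have hy : y = 0 := Subsingleton.elim y 0
    have hz : z = 0 := Subsingleton.elim z 0
    subst hx; subst hy; subst hz
    have hn := norm1 hω
    show ω 0 0 0 * ((1 : kˣ) ^ ((0 : ZMod 1).val * _))⁻¹ = _
    rw [hn, one_pow]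
    simp

end Parts
end St1Aux

open St1Aux in
theorem statement1 {k : Type*} [Field k] [IsAlgClosed k] [CharZero k]
    (N : ℕ) (hN : 1 ≤ N) :
    (∀ θ : kˣ, θ ^ N = 1 → IsAddCocycle3 (omegaStd N θ)) ∧
    (∀ θ θ' : kˣ, ∀ n m ℓ : ZMod N,
      omegaStd N θ n m ℓ * omegaStd N θ' n m ℓ = omegaStd N (θ * θ') n m ℓ) ∧
    (∀ θ θ' : kˣ, θ ^ N = 1 → θ' ^ N = 1 →
      (AddCohomologous3 (omegaStd N θ) (omegaStd N θ') ↔ θ = θ')) ∧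
    (∀ ω : ZMod N → ZMod N → ZMod N → kˣ, IsAddCocycle3 ω →
      ∃ θ : kˣ, θ ^ N = 1 ∧ AddCohomologous3 ω (omegaStd N θ)) := by
  haveI : NeZero N := ⟨by omega⟩
  refine ⟨fun θ hθ => part1 θ hθ, fun θ θ' n m ℓ => (mul_pow θ θ' _).symm,
    fun θ θ' hθ hθ' => ⟨fun h => part3fwd θ θ' hθ hθ' h, fun h => ?_⟩,
    fun ω hω => part4 hN ω hω⟩
  subst h
  exact ⟨fun _ _ => 1, fun x y z => by simp⟩
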